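/- Let q_S be a K_S-level interval quantizer on [0,1] (piecewise constant with K_S cells). If q_1, ..., q_N are interval quantizers with K levels each and positive weights u_i summing to 1 satisfy Σ_i u_i q_i = q_S pointwise, then every interior cell boundary of q_S is a cell boundary of at least one q_i; consequently K_S ≤ N(K−1)+1. -/

import Mathlib

lemma find_cell {K : ℕ} (b : Fin (K+1) → ℝ) (hmono : StrictMono b)
    (hb0 : b 0 = 0) (hb1 : b (Fin.last K) = 1) (y : ℝ) (hy : y ∈ Set.Ioo (0:ℝ) 1)
    (hne : ∀ k, b k ≠ y) :
    ∃ k : Fin K, b k.castSucc < y ∧ y < b k.succ := by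
  classical
  set T := Finset.univ.filter (fun k : Fin (K+1) => b k < y) with hTdef
  have hT : T.Nonempty := ⟨0, by simp [hTdef, hb0, hy.1]⟩
  set m := T.max' hT with hm
  have hmT : m ∈ T := T.max'_mem hT
  have hmlt : b m < y := by simpa [hTdef] using hmT
  have hmK : (m : ℕ) < K := by
    by_contra h
    have hlast : m = Fin.last K := by
      apply Fin.ext
      have := m.isLt
      simp only [Fin.val_last]; omega
    rw [hlast, hb1] at hmlt
    exact absurd hmlt (not_lt.2 hy.2.le)
  have hnot : ¬ b (⟨(m:ℕ)+1, by omega⟩ : Fin (K+1)) < y := by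
    intro h
    have hmem : (⟨(m:ℕ)+1, by omega⟩ : Fin (K+1)) ∈ T := by simp [hTdef, h]
    have hle := T.le_max' _ hmem
    have : ((m:ℕ)+1) ≤ (m:ℕ) := hle
    omega
  refine ⟨⟨(m:ℕ), hmK⟩, ?_, ?_⟩
  · have : (⟨(m:ℕ), hmK⟩ : Fin K).castSucc = m := Fin.ext rfl
    rw [this]; exact hmlt
  · have heq : (⟨(m:ℕ), hmK⟩ : Fin K).succ = (⟨(m:ℕ)+1, by omega⟩ : Fin (K+1)) := rfl
    rw [heq]
    exact lt_of_le_of_ne (not_lt.1 hnot) (hne _).symm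


set_option maxHeartbeats 1000000 in
/-- if a weighted sum of N interval quantizers, each with K
cells, equals a K_S-cell interval quantizer q_S (with distinct values on
adjacent cells) pointwise on [0,1], then every interior cell boundary of q_S
is a cell boundary of some qᵢ, and consequently K_S ≤ N(K−1)+1. -/
theorem boundaries_split_and_level_bound
    (N KS K : ℕ) (hN : 1 ≤ N) (hKS : 1 ≤ KS) (hK : 1 ≤ K)
    (u : Fin N → ℝ) (hu : ∀ i, 0 < u i) (husum : ∑ i, u i = 1)
    -- the K_S-level interval quantizer q_S with boundaries bS
    (qS : ℝ → ℝ) (bS : Fin (KS + 1) → ℝ)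
    (hbSmono : StrictMono bS) (hbS0 : bS 0 = 0) (hbS1 : bS (Fin.last KS) = 1)
    (hqSconst : ∀ k : Fin KS,
      ∀ x ∈ Set.Ico (bS k.castSucc) (bS k.succ), qS x = qS (bS k.castSucc))
    -- adjacent cells of q_S carry distinct values
    (hqSadj : ∀ (j : ℕ) (h : j + 1 < KS),
      qS (bS ⟨j, by omega⟩) ≠ qS (bS ⟨j + 1, by omega⟩))
    -- the N K-level interval quantizers qᵢ with boundaries b i
    (q : Fin N → ℝ → ℝ) (b : Fin N → Fin (K + 1) → ℝ)
    (hbmono : ∀ i, StrictMono (b i))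
    (hb0 : ∀ i, b i 0 = 0) (hb1 : ∀ i, b i (Fin.last K) = 1)
    (hqconst : ∀ i, ∀ k : Fin K,
      ∀ x ∈ Set.Ico (b i k.castSucc) (b i k.succ), q i x = q i (b i k.castSucc))
    -- the weighted sum of the qᵢ equals q_S on [0,1]
    (hsum : ∀ x ∈ Set.Icc (0:ℝ) 1, ∑ i, u i * q i x = qS x) :
    (∀ j : Fin (KS + 1), bS j ∈ Set.Ioo (0:ℝ) 1 →
        ∃ (i : Fin N) (k : Fin (K + 1)), b i k = bS j) ∧
    KS ≤ N * (K - 1) + 1 := by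
  classical
  have key : ∀ j : Fin (KS + 1), bS j ∈ Set.Ioo (0:ℝ) 1 →
      ∃ (i : Fin N) (k : Fin (K + 1)), b i k = bS j := by
    intro j hj
    by_contra hcon
    push_neg at hcon
    have hcell : ∀ i, ∃ k : Fin K, b i k.castSucc < bS j ∧ bS j < b i k.succ :=
      fun i => find_cell (b i) (hbmono i) (hb0 i) (hb1 i) (bS j) hj (fun k => hcon i k)
    choose kc hkc1 hkc2 using hcell
    have hj0 : 0 < (j:ℕ) := by
      by_contra h
      have hz : j = 0 := Fin.ext (by rw [Fin.val_zero]; omega)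
      rw [hz, hbS0] at hj; exact lt_irrefl _ hj.1
    have hjK : (j:ℕ) < KS := by
      by_contra h
      have hl : j = Fin.last KS := Fin.ext (by have := j.isLt; simp only [Fin.val_last]; omega)
      rw [hl, hbS1] at hj; exact lt_irrefl _ hj.2
    have hNne : (Finset.univ : Finset (Fin N)).Nonempty := by
      have : Nonempty (Fin N) := ⟨⟨0, by omega⟩⟩
      exact Finset.univ_nonempty
    set t0 := bS ⟨(j:ℕ) - 1, by omega⟩ with ht0
    set t1 := Finset.univ.sup' hNne (fun i => b i (kc i).castSucc) with ht1
    set c := max t0 t1 with hcdef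
    have hclt : c < bS j := by
      apply max_lt
      · exact hbSmono (show (⟨(j:ℕ)-1, by omega⟩ : Fin (KS+1)) < j by
          rw [Fin.lt_def]; show (j:ℕ) - 1 < (j:ℕ); omega)
      · rw [ht1, Finset.sup'_lt_iff]
        intro i _
        exact hkc1 i
    set x := (c + bS j)/2 with hxdef
    have hcx : c < x := by rw [hxdef]; linarith
    have hxlt : x < bS j := by rw [hxdef]; linarith
    have ht0le : t0 ≤ c := le_max_left _ _
    have hx0 : (0:ℝ) ≤ x := by
      have h1 : bS 0 ≤ t0 := hbSmono.monotone (by rw [Fin.le_def]; simp)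
      rw [hbS0] at h1
      linarith
    have hx1 : x ≤ 1 := le_of_lt (lt_trans hxlt hj.2)
    have hbj1 : bS j ∈ Set.Icc (0:ℝ) 1 := ⟨hj.1.le, hj.2.le⟩
    have hxmem : x ∈ Set.Icc (0:ℝ) 1 := ⟨hx0, hx1⟩
    -- q i agrees at x and bS j
    have hqeq : ∀ i, q i x = q i (bS j) := by
      intro i
      have hle : b i (kc i).castSucc ≤ c := le_trans (Finset.le_sup' (fun i => b i (kc i).castSucc) (Finset.mem_univ i)) (le_max_right _ _)
      have h1 := hqconst i (kc i) x ⟨le_trans hle hcx.le, lt_trans hxlt (hkc2 i)⟩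
      have h2 := hqconst i (kc i) (bS j) ⟨(hkc1 i).le, hkc2 i⟩
      rw [h1, h2]
    have hsx := hsum x hxmem
    have hsj := hsum (bS j) hbj1
    have hqS : qS x = qS (bS j) := by
      rw [← hsx, ← hsj]
      exact Finset.sum_congr rfl (fun i _ => by rw [hqeq i])
    -- qS x = qS (bS ⟨j-1⟩)
    have hsucc : ((⟨(j:ℕ)-1, by omega⟩ : Fin KS)).succ = j := Fin.ext (by simp; omega)
    have hcs : ((⟨(j:ℕ)-1, by omega⟩ : Fin KS)).castSucc = (⟨(j:ℕ)-1, by omega⟩ : Fin (KS+1)) :=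
      Fin.ext rfl
    have hqx : qS x = qS t0 := by
      have hmem2 : x ∈ Set.Ico (bS ((⟨(j:ℕ)-1, by omega⟩ : Fin KS)).castSucc)
          (bS ((⟨(j:ℕ)-1, by omega⟩ : Fin KS)).succ) := by
        refine ⟨?_, ?_⟩
        · rw [hcs]; exact le_trans ht0le hcx.le
        · rw [hsucc]; exact hxlt
      have := hqSconst ⟨(j:ℕ)-1, by omega⟩ x hmem2
      rw [this, hcs]
    have hadj := hqSadj ((j:ℕ)-1) (by omega)
    apply hadj
    have hjj : (⟨(j:ℕ)-1+1, by omega⟩ : Fin (KS+1)) = j := Fin.ext (by simp; omega)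
    calc qS (bS ⟨(j:ℕ)-1, by omega⟩) = qS t0 := rfl
      _ = qS x := hqx.symm
      _ = qS (bS j) := hqS
      _ = qS (bS ⟨(j:ℕ)-1+1, by omega⟩) := by rw [hjj]
  refine ⟨key, ?_⟩
  -- counting argument
  have H : ∀ j : Fin (KS - 1), ∃ p : Fin N × Fin (K - 1),
      b p.1 ⟨(p.2:ℕ)+1, by have := p.2.isLt; omega⟩ = bS ⟨(j:ℕ)+1, by have := j.isLt; omega⟩ := by
    intro j
    have hjlt : (j:ℕ) + 1 < KS := by have := j.isLt; omega
    set jj : Fin (KS+1) := ⟨(j:ℕ)+1, by omega⟩ with hjj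
    have hmem : bS jj ∈ Set.Ioo (0:ℝ) 1 := by
      constructor
      · rw [← hbS0]
        exact hbSmono (by rw [Fin.lt_def, Fin.val_zero]; show 0 < (j:ℕ)+1; omega)
      · rw [← hbS1]
        exact hbSmono (by rw [Fin.lt_def, Fin.val_last]; show (j:ℕ)+1 < KS; omega)
    obtain ⟨i, k, hik⟩ := key jj hmem
    have hk0 : 0 < (k:ℕ) := by
      by_contra h
      have hz : k = 0 := Fin.ext (by rw [Fin.val_zero]; omega)
      rw [hz, hb0 i] at hik
      exact absurd hik.symm (ne_of_gt hmem.1)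
    have hkK : (k:ℕ) < K := by
      by_contra h
      have hl : k = Fin.last K := Fin.ext (by have := k.isLt; simp only [Fin.val_last]; omega)
      rw [hl, hb1 i] at hik
      exact absurd hik (ne_of_gt hmem.2)
    refine ⟨(i, ⟨(k:ℕ)-1, by omega⟩), ?_⟩
    have hkk : (⟨(k:ℕ)-1+1, by omega⟩ : Fin (K+1)) = k := Fin.ext (by simp; omega)
    exact (congrArg (b i) hkk).trans hik
  choose f hf using H
  have hinj : Function.Injective f := by
    intro j1 j2 h
    have h1 := hf j1
    have h2 := hf j2
    rw [h] at h1
    have : bS ⟨(j1:ℕ)+1, by have := j1.isLt; omega⟩ = bS ⟨(j2:ℕ)+1, by have := j2.isLt; omega⟩ := by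
      rw [← h1, ← h2]
    have := hbSmono.injective this
    have hv : (j1:ℕ)+1 = (j2:ℕ)+1 := congrArg Fin.val this
    exact Fin.ext (by omega)
  have hcard := Fintype.card_le_of_injective f hinj
  simp only [Fintype.card_fin, Fintype.card_prod] at hcard
  omega
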